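/- For every finite tree T with V vertices and every integer k with 0 ≤ k ≤ V, the 'zero level' Seifert cohomology is one-dimensional: dim SH^k(T,k) = 1; and SH^k(T,k) = 0 for k outside [0,V]. -/
import Mathlib


open Polynomial Matrix

attribute [local instance] Classical.propDecidable

namespace Seifert

variable {V : Type} [Fintype V]

/-- A matching of a graph `G`: a finite set of edges of `G` that are pairwise disjoint. -/
def IsMatching (G : SimpleGraph V) (R : Finset (Sym2 V)) : Prop :=
  (∀ e ∈ R, e ∈ G.edgeSet) ∧
    ∀ e ∈ R, ∀ f ∈ R, e ≠ f → ∀ v : V, v ∈ e → v ∉ f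

/-- A perfect matching: a matching covering every vertex. -/
def IsPerfectMatching (G : SimpleGraph V) (R : Finset (Sym2 V)) : Prop :=
  IsMatching G R ∧ ∀ v : V, ∃ e ∈ R, v ∈ e

/-- A configuration on `G`: a matching (the set of red edges) together with an assignment
of a sign (`true` = plus, `false` = minus) to every vertex not covered by a red edge;
vertices covered by a red edge get `none`. -/
structure Config (G : SimpleGraph V) where
  red : Finset (Sym2 V)
  matching : IsMatching G red
  sign : V → Option Bool
  sign_none : ∀ v : V, sign v = none ↔ ∃ e ∈ red, v ∈ e

instance (G : SimpleGraph V) : Finite (Config G) :=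
  Finite.of_injective (fun C => (C.red, C.sign)) (by
    rintro ⟨r, hr, s, hs⟩ ⟨r', hr', s', hs'⟩ h
    simp only [Prod.mk.injEq] at h
    obtain ⟨h1, h2⟩ := h
    subst h1; subst h2; rfl)

noncomputable instance (G : SimpleGraph V) : Fintype (Config G) := Fintype.ofFinite _

/-- The grading `Q`: the number of minuses. -/
noncomputable def Qg {G : SimpleGraph V} (C : Config G) : ℕ :=
  (Finset.univ.filter fun v : V => C.sign v = some false).card

/-- The grading `E`: the number of minuses plus the number of red edges. -/
noncomputable def Eg {G : SimpleGraph V} (C : Config G) : ℕ := Qg C + C.red.card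

/-- `DStep C C'` holds iff `C'` is one of the summands of `D(C)`: it is obtained from `C`
by deleting one red edge `e` and assigning a plus to one endpoint of `e` and a minus to
the other. -/
def DStep {G : SimpleGraph V} (C C' : Config G) : Prop :=
  ∃ e ∈ C.red, C'.red = C.red.erase e ∧
    (∀ x : V, x ∉ e → C'.sign x = C.sign x) ∧
    ∃ u v : V, e = s(u, v) ∧ C'.sign u = some true ∧ C'.sign v = some false

/-- `dStep C C'` holds iff `C'` is one of the summands of `d(C)`: it is obtained from `C`
by changing the sign of one vertex from plus to minus. -/
def dStep {G : SimpleGraph V} (C C' : Config G) : Prop :=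
  C'.red = C.red ∧ ∃ w : V, C.sign w = some true ∧ C'.sign w = some false ∧
    ∀ x : V, x ≠ w → C'.sign x = C.sign x

/-- The linear map on spaces of `F₂`-valued functions induced by a relation `r`:
the basis vector of `a` is sent to the sum of the basis vectors of all `b` with `r a b`. -/
noncomputable def sumLin {α β : Type} [Fintype α] (r : α → β → Prop) :
    (α → ZMod 2) →ₗ[ZMod 2] (β → ZMod 2) where
  toFun f b := ∑ a : α, if r a b then f a else 0
  map_add' f g := by
    funext b
    simp only [Pi.add_apply]
    rw [← Finset.sum_add_distrib]
    exact Finset.sum_congr rfl fun a _ => by by_cases h : r a b <;> simp [h]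
  map_smul' c f := by
    funext b
    simp only [RingHom.id_apply, Pi.smul_apply, smul_eq_mul, Finset.mul_sum]
    exact Finset.sum_congr rfl fun a _ => by by_cases h : r a b <;> simp [h]

/-- The differential `D` on the total Seifert complex `SC(T)`. -/
noncomputable def Dmap (G : SimpleGraph V) :
    (Config G → ZMod 2) →ₗ[ZMod 2] (Config G → ZMod 2) :=
  sumLin DStep

/-- The differential `d` on the total Seifert complex `SC(T)`. -/
noncomputable def dmap (G : SimpleGraph V) :
    (Config G → ZMod 2) →ₗ[ZMod 2] (Config G → ZMod 2) :=
  sumLin dStep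

/-- The graded piece `SC^k(T,n)`: the `F₂`-vector space with basis the configurations
with `Q = k` and `E = n`. -/
abbrev SC (G : SimpleGraph V) (k n : ℤ) : Type :=
  {C : Config G // (Qg C : ℤ) = k ∧ (Eg C : ℤ) = n} → ZMod 2

/-- The differential `D` between graded pieces. (Mathematically it is nonzero only
from `SC^k(T,n)` to `SC^{k+1}(T,n)`.) -/
noncomputable def Dgr (G : SimpleGraph V) (k n k' n' : ℤ) :
    SC G k n →ₗ[ZMod 2] SC G k' n' :=
  sumLin fun C C' => DStep C.1 C'.1

/-- The dimension of the cohomology `ker g / im f` at the middle term of `A —f→ B —g→ C`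
(taking the image of `f` intersected with the kernel of `g`). -/
noncomputable def cohDim {A B M : Type} [AddCommGroup A] [AddCommGroup B] [AddCommGroup M]
    [Module (ZMod 2) A] [Module (ZMod 2) B] [Module (ZMod 2) M]
    (f : A →ₗ[ZMod 2] B) (g : B →ₗ[ZMod 2] M) : ℕ :=
  Module.finrank (ZMod 2)
    (LinearMap.ker g ⧸ (LinearMap.range f).comap (LinearMap.ker g).subtype)

/-- The dimension of the Seifert cohomology `SH^k(T,n)`. -/
noncomputable def SHdim (G : SimpleGraph V) (k n : ℤ) : ℕ :=
  cohDim (Dgr G (k - 1) n k n) (Dgr G k n (k + 1) n)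

/-- The Seifert matrix of a graph with respect to an enumeration of its vertices. -/
noncomputable def seifertMatrix (G : SimpleGraph V) {m : ℕ} (e : V ≃ Fin m) :
    Matrix (Fin m) (Fin m) ℤ := fun i j =>
  if i = j then -1 else if i < j ∧ G.Adj (e.symm i) (e.symm j) then 1 else 0

/-- The Alexander polynomial `det (t S - Sᵀ)` of a graph with respect to an enumeration
of its vertices. -/
noncomputable def alexDet (G : SimpleGraph V) {m : ℕ} (e : V ≃ Fin m) : Polynomial ℤ :=
  let S : Matrix (Fin m) (Fin m) (Polynomial ℤ) :=
    (seifertMatrix G e).map fun a => (Polynomial.C a : Polynomial ℤ)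
  ((X : Polynomial ℤ) • S - Sᵀ).det

/-- The Alexander polynomial of a graph (or forest), defined as the matching polynomial
`Σ_R t^{|R|} (1-t)^{V - 2|R|}`, the sum being over all matchings `R`. -/
noncomputable def alexMatch (G : SimpleGraph V) : Polynomial ℤ :=
  ∑ R : {R : Finset (Sym2 V) // IsMatching G R},
    X ^ R.1.card * (1 - X) ^ (Fintype.card V - 2 * R.1.card)

set_option linter.unusedSectionVars false

lemma Config.ext' {G : SimpleGraph V} {C C' : Config G} (h1 : C.red = C'.red)
    (h2 : C.sign = C'.sign) : C = C' := by
  cases C; cases C'; simp_all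

/-- The configuration with no red edges and minus exactly on `s`. -/
noncomputable def cfg (G : SimpleGraph V) (s : Finset V) : Config G where
  red := ∅
  matching := ⟨by simp, by simp⟩
  sign v := if v ∈ s then some false else some true
  sign_none v := by
    constructor
    · intro h; by_cases hv : v ∈ s <;> simp_all
    · simp

lemma cfg_sign (G : SimpleGraph V) (s : Finset V) (v : V) :
    (cfg G s).sign v = if v ∈ s then some false else some true := rfl

lemma cfg_red (G : SimpleGraph V) (s : Finset V) : (cfg G s).red = ∅ := rfl

lemma Qg_cfg (G : SimpleGraph V) (s : Finset V) : Qg (cfg G s) = s.card := by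
  have h : (Finset.univ.filter fun v => (cfg G s).sign v = some false) = s := by
    ext v; by_cases h : v ∈ s <;> simp [cfg_sign, h]
  rw [Qg, h]

lemma Eg_cfg (G : SimpleGraph V) (s : Finset V) : Eg (cfg G s) = s.card := by
  simp [Eg, Qg_cfg, cfg_red]

/-- The set of minus-signed vertices. -/
noncomputable def minusSet {G : SimpleGraph V} (C : Config G) : Finset V :=
  Finset.univ.filter fun v => C.sign v = some false

lemma Qg_eq_card_minusSet {G : SimpleGraph V} (C : Config G) : Qg C = (minusSet C).card := rfl

lemma eq_cfg_minusSet {G : SimpleGraph V} {C : Config G} (h : C.red = ∅) :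
    C = cfg G (minusSet C) := by
  apply Config.ext'
  · simp [h, cfg_red]
  · funext v
    have hnone : C.sign v ≠ none := by
      simp [C.sign_none v, h]
    rw [cfg_sign]
    rcases hb : C.sign v with _ | b
    · exact absurd hb hnone
    · rcases b with _ | _
      · rw [if_pos]; simp [minusSet, hb]
      · rw [if_neg]; simp [minusSet, hb]

lemma red_empty_of_grading {G : SimpleGraph V} {C : Config G} {k : ℤ}
    (h : (Qg C : ℤ) = k ∧ (Eg C : ℤ) = k) : C.red = ∅ := by
  obtain ⟨h1, h2⟩ := h
  have h3 : (C.red.card : ℤ) = 0 := by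
    simp [Eg] at h2; omega
  simpa [Finset.card_eq_zero] using (by exact_mod_cast h3 : C.red.card = 0)
/-- Moving a minus from `u` to an adjacent empty vertex `v`. -/
def Move (G : SimpleGraph V) (s t : Finset V) : Prop :=
  ∃ u v : V, G.Adj u v ∧ u ∈ s ∧ v ∉ s ∧ t = insert v (s.erase u)

lemma Move.card_eq {G : SimpleGraph V} {s t : Finset V} (h : Move G s t) :
    t.card = s.card := by
  obtain ⟨u, v, hadj, hu, hv, rfl⟩ := h
  rw [Finset.card_insert_of_notMem (fun hmem => hv (Finset.mem_of_mem_erase hmem)),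
    Finset.card_erase_of_mem hu]
  have : 1 ≤ s.card := Finset.card_pos.2 ⟨u, hu⟩
  omega

lemma reflTransGen_move_card {G : SimpleGraph V} {s t : Finset V}
    (h : Relation.ReflTransGen (Move G) s t) : t.card = s.card := by
  induction h with
  | refl => rfl
  | tail _ hm ih => rw [hm.card_eq, ih]

lemma walk_move {G : SimpleGraph V} {a b : V} (p : G.Walk b a) :
    ∀ (s : Finset V), a ∈ s → b ∉ s →
      Relation.ReflTransGen (Move G) s (insert b (s.erase a)) := by
  induction p with
  | nil =>
    intro s ha hb; exact absurd ha hb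
  | @cons b c a h q ih =>
    intro s ha hb
    by_cases hc : c ∈ s
    · by_cases hca : c = a
      · exact Relation.ReflTransGen.single ⟨c, b, h.symm, hc, hb, by rw [hca]⟩
      · -- move c to b first, then recurse
        have hmove : Move G s (insert b (s.erase c)) := ⟨c, b, h.symm, hc, hb, rfl⟩
        have ha1 : a ∈ insert b (s.erase c) :=
          Finset.mem_insert_of_mem (Finset.mem_erase.2 ⟨fun hh => hca hh.symm, ha⟩)
        have hc1 : c ∉ insert b (s.erase c) := by
          simp [h.ne', Finset.mem_erase]
        have hrec := ih (insert b (s.erase c)) ha1 hc1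
        have heq : insert c ((insert b (s.erase c)).erase a) = insert b (s.erase a) := by
          have hab : a ≠ b := fun hh => hb (hh ▸ ha)
          rw [Finset.erase_insert_of_ne (Ne.symm hab) ]
          rw [Finset.erase_right_comm]
          rw [Finset.insert_comm]
          rw [Finset.insert_erase (Finset.mem_erase.2 ⟨hca, hc⟩)]
        rw [heq] at hrec
        exact Relation.ReflTransGen.head hmove hrec
    · -- c ∉ s : recurse first, then move c to b
      have hrec := ih s ha hc
      have hmove : Move G (insert c (s.erase a)) (insert b (s.erase a)) := by
        refine ⟨c, b, h.symm, Finset.mem_insert_self _ _, ?_, ?_⟩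
        · simp only [Finset.mem_insert, Finset.mem_erase]
          push_neg
          exact ⟨h.ne, fun _ => hb⟩
        · rw [Finset.erase_insert (by simp [hc])]
      exact hrec.tail hmove

lemma reach_of_card_eq {G : SimpleGraph V} (hG : G.Connected) :
    ∀ (n : ℕ) (s t : Finset V), (s \ t).card = n → s.card = t.card →
      Relation.ReflTransGen (Move G) s t := by
  intro n
  induction n using Nat.strong_induction_on with
  | _ n ih =>
    intro s t hn hcard
    by_cases hst : s = t
    · subst hst; exact Relation.ReflTransGen.refl
    · have hne : (s \ t).Nonempty := by
        rw [Finset.sdiff_nonempty]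
        intro hsub
        exact hst (Finset.eq_of_subset_of_card_le hsub (le_of_eq hcard.symm))
      obtain ⟨a, ha⟩ := hne
      have hne' : (t \ s).Nonempty := by
        rw [Finset.sdiff_nonempty]
        intro hsub
        exact hst (Finset.eq_of_subset_of_card_le hsub (le_of_eq hcard)).symm
      obtain ⟨b, hb⟩ := hne'
      obtain ⟨ha1, ha2⟩ := Finset.mem_sdiff.1 ha
      obtain ⟨hb1, hb2⟩ := Finset.mem_sdiff.1 hb
      have p : G.Walk b a := (hG.preconnected b a).some
      have h1 := walk_move p s ha1 hb2
      have heq : (insert b (s.erase a)) \ t = (s \ t).erase a := by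
        ext x
        simp only [Finset.mem_sdiff, Finset.mem_insert, Finset.mem_erase]
        constructor
        · rintro ⟨hx1 | hx2, hx3⟩
          · exact absurd (hx1 ▸ hb1) hx3
          · exact ⟨hx2.1, hx2.2, hx3⟩
        · rintro ⟨hx1, hx2, hx3⟩
          exact ⟨Or.inr ⟨hx1, hx2⟩, hx3⟩
      have hlt : ((insert b (s.erase a)) \ t).card < n := by
        rw [heq, Finset.card_erase_of_mem ha, hn]
        have : 1 ≤ n := by
          rw [← hn]; exact Finset.card_pos.2 ⟨a, ha⟩
        omega
      have hcard' : (insert b (s.erase a)).card = t.card := by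
        rw [Finset.card_insert_of_notMem (fun hmem => hb2 (Finset.mem_of_mem_erase hmem)),
          Finset.card_erase_of_mem ha1]
        have : 1 ≤ s.card := Finset.card_pos.2 ⟨a, ha1⟩
        omega
      exact h1.trans (ih _ hlt _ _ rfl hcard')
/-- The configuration with a single red edge `s(u,v)` and minuses on `s \ {u,v}`. -/
noncomputable def midCfg (G : SimpleGraph V) (u v : V) (huv : G.Adj u v) (s : Finset V) :
    Config G where
  red := {s(u, v)}
  matching := by
    constructor
    · intro e he
      rw [Finset.mem_singleton] at he
      subst he
      exact huv
    · intro e he f hf hef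
      rw [Finset.mem_singleton] at he hf
      exact absurd (he.trans hf.symm) hef
  sign w := if w = u ∨ w = v then none else if w ∈ s then some false else some true
  sign_none w := by
    by_cases h : w = u ∨ w = v
    · simp [h, Sym2.mem_iff]
    · by_cases hw : w ∈ s <;> simp [h, hw, Sym2.mem_iff]

lemma midCfg_sign (G : SimpleGraph V) (u v : V) (huv : G.Adj u v) (s : Finset V) (w : V) :
    (midCfg G u v huv s).sign w =
      if w = u ∨ w = v then none else if w ∈ s then some false else some true := rfl

lemma midCfg_red (G : SimpleGraph V) (u v : V) (huv : G.Adj u v) (s : Finset V) :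
    (midCfg G u v huv s).red = {s(u, v)} := rfl

lemma Qg_midCfg (G : SimpleGraph V) (u v : V) (huv : G.Adj u v) {s : Finset V}
    (hu : u ∈ s) (hv : v ∉ s) : Qg (midCfg G u v huv s) = s.card - 1 := by
  have h : (Finset.univ.filter fun w => (midCfg G u v huv s).sign w = some false)
      = s.erase u := by
    ext w
    by_cases h1 : w = u
    · subst h1; simp [midCfg_sign]
    · by_cases h2 : w = v
      · subst h2; simp [midCfg_sign, hv]
      · by_cases h3 : w ∈ s <;> simp [midCfg_sign, h1, h2, h3]
  rw [Qg, h, Finset.card_erase_of_mem hu]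

lemma Eg_midCfg (G : SimpleGraph V) (u v : V) (huv : G.Adj u v) {s : Finset V}
    (hu : u ∈ s) (hv : v ∉ s) : Eg (midCfg G u v huv s) = s.card := by
  rw [Eg, Qg_midCfg G u v huv hu hv, midCfg_red, Finset.card_singleton]
  have : 1 ≤ s.card := Finset.card_pos.2 ⟨u, hu⟩
  omega

lemma eq_midCfg {G : SimpleGraph V} {C : Config G} {u v : V}
    (h : C.red = {s(u, v)}) (huv : G.Adj u v) :
    C = midCfg G u v huv (insert u (minusSet C)) := by
  have hcov : ∀ w : V, w = u ∨ w = v → C.sign w = none := by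
    intro w hw
    rw [C.sign_none w, h]
    exact ⟨s(u, v), Finset.mem_singleton_self _, by rw [Sym2.mem_iff]; exact hw⟩
  have humem : u ∉ minusSet C := by
    simp [minusSet, hcov u (Or.inl rfl)]
  have hvmem : v ∉ minusSet C := by
    simp [minusSet, hcov v (Or.inr rfl)]
  apply Config.ext'
  · rw [h, midCfg_red]
  · funext w
    rw [midCfg_sign]
    by_cases hw : w = u ∨ w = v
    · rw [if_pos hw, hcov w hw]
    · rw [if_neg hw]
      push_neg at hw
      have hnone : C.sign w ≠ none := by
        intro hn
        rw [C.sign_none w, h] at hn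
        obtain ⟨e, he, hme⟩ := hn
        rw [Finset.mem_singleton] at he
        subst he
        rw [Sym2.mem_iff] at hme
        rcases hme with h1 | h2
        · exact hw.1 h1
        · exact hw.2 h2
      have hmem : w ∈ insert u (minusSet C) ↔ C.sign w = some false := by
        simp [Finset.mem_insert, hw.1, minusSet]
      rcases hb : C.sign w with _ | b
      · exact absurd hb hnone
      · rcases b with _ | _
        · rw [if_pos (hmem.2 hb)]
        · rw [if_neg]
          rw [hmem, hb]
          simp
lemma mem_insert_erase_iff {s : Finset V} {u v w : V} (hw1 : w ≠ u) (hw2 : w ≠ v) :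
    w ∈ insert v (s.erase u) ↔ w ∈ s := by
  simp [Finset.mem_insert, Finset.mem_erase, hw1, hw2]

lemma dstep_midCfg_iff {G : SimpleGraph V} {u v : V} (huv : G.Adj u v) {s : Finset V}
    (hu : u ∈ s) (hv : v ∉ s) (C' : Config G) :
    DStep (midCfg G u v huv s) C' ↔ C' = cfg G s ∨ C' = cfg G (insert v (s.erase u)) := by
  have hne : u ≠ v := huv.ne
  have hut : u ∉ insert v (s.erase u) := by simp [hne]
  have hvt : v ∈ insert v (s.erase u) := Finset.mem_insert_self _ _
  constructor
  · rintro ⟨e, he, hred, hoff, u', v', heq, hsu, hsv⟩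
    rw [midCfg_red, Finset.mem_singleton] at he
    subst he
    rw [midCfg_red, Finset.erase_singleton] at hred
    have hoff' : ∀ x : V, x ≠ u → x ≠ v → C'.sign x =
        (if x ∈ s then some false else some true) := by
      intro x hx1 hx2
      have hx : x ∉ s(u, v) := by rw [Sym2.mem_iff]; push_neg; exact ⟨hx1, hx2⟩
      rw [hoff x hx, midCfg_sign, if_neg (by push_neg; exact ⟨hx1, hx2⟩)]
    rw [Sym2.eq_iff] at heq
    rcases heq with ⟨rfl, rfl⟩ | ⟨rfl, rfl⟩
    · right
      apply Config.ext'
      · rw [hred, cfg_red]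
      · funext w
        rw [cfg_sign]
        by_cases h1 : w = u
        · subst h1; rw [hsu, if_neg hut]
        · by_cases h2 : w = v
          · subst h2; rw [hsv, if_pos hvt]
          · rw [hoff' w h1 h2]
            simp only [mem_insert_erase_iff h1 h2]
    · left
      apply Config.ext'
      · rw [hred, cfg_red]
      · funext w
        rw [cfg_sign]
        by_cases h1 : w = u
        · subst h1; rw [hsv, if_pos hu]
        · by_cases h2 : w = v
          · subst h2; rw [hsu, if_neg hv]
          · rw [hoff' w h1 h2]
  · rintro (rfl | rfl)
    · refine ⟨s(u, v), Finset.mem_singleton_self _, ?_, ?_, v, u, Sym2.eq_swap.symm, ?_, ?_⟩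
      · rw [cfg_red, midCfg_red, Finset.erase_singleton]
      · intro x hx
        rw [Sym2.mem_iff] at hx
        push_neg at hx
        rw [cfg_sign, midCfg_sign, if_neg (not_or.mpr hx)]
      · rw [cfg_sign, if_neg hv]
      · rw [cfg_sign, if_pos hu]
    · refine ⟨s(u, v), Finset.mem_singleton_self _, ?_, ?_, u, v, rfl, ?_, ?_⟩
      · rw [cfg_red, midCfg_red, Finset.erase_singleton]
      · intro x hx
        rw [Sym2.mem_iff] at hx
        push_neg at hx
        rw [cfg_sign, midCfg_sign, if_neg (not_or.mpr hx)]
        simp only [mem_insert_erase_iff hx.1 hx.2]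
      · rw [cfg_sign, if_neg hut]
      · rw [cfg_sign, if_pos hvt]

lemma cfg_ne_cfg {G : SimpleGraph V} {u v : V} {s : Finset V} (hu : u ∈ s) (hne : u ≠ v) :
    cfg G s ≠ cfg G (insert v (s.erase u)) := by
  intro h
  have h1 := congrArg (fun C => Config.sign C u) h
  simp only [cfg_sign] at h1
  rw [if_pos hu, if_neg (by simp [hne])] at h1
  simp at h1
lemma sumLin_apply {α β : Type} [Fintype α] (r : α → β → Prop) (f : α → ZMod 2) (b : β) :
    sumLin r f b = ∑ a : α, if r a b then f a else 0 := rfl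

lemma sumLin_single {α β : Type} [Fintype α] [DecidableEq α] (r : α → β → Prop) (a : α) (x : ZMod 2) (b : β) :
    sumLin r (Pi.single a x) b = if r a b then x else 0 := by
  rw [sumLin_apply, Finset.sum_eq_single a]
  · rw [Pi.single_eq_same]
  · intro a' _ hne
    rw [Pi.single_eq_of_ne hne]
    split <;> rfl
  · intro h
    exact absurd (Finset.mem_univ a) h

/-- The element of `SC G k k` given by a `k`-element set of minuses. -/
noncomputable def cfgEl (G : SimpleGraph V) (k : ℤ) (s : Finset V) (hs : (s.card : ℤ) = k) :
    {C : Config G // (Qg C : ℤ) = k ∧ (Eg C : ℤ) = k} :=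
  ⟨cfg G s, by rw [Qg_cfg, Eg_cfg]; exact ⟨hs, hs⟩⟩

lemma pair_mem_range {G : SimpleGraph V} (k : ℤ) {s t : Finset V} (hm : Move G s t)
    (hs : (s.card : ℤ) = k) (ht : (t.card : ℤ) = k) :
    Pi.single (cfgEl G k s hs) (1 : ZMod 2) + Pi.single (cfgEl G k t ht) 1 ∈
      LinearMap.range (Dgr G (k - 1) k k k) := by
  obtain ⟨u, v, hadj, hu, hv, rfl⟩ := hm
  have hcard1 : 1 ≤ s.card := Finset.card_pos.2 ⟨u, hu⟩
  have hQ : ((Qg (midCfg G u v hadj s) : ℤ)) = k - 1 := by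
    rw [Qg_midCfg G u v hadj hu hv]
    push_cast [hcard1]
    omega
  have hE : ((Eg (midCfg G u v hadj s) : ℤ)) = k := by
    rw [Eg_midCfg G u v hadj hu hv]; exact hs
  refine ⟨Pi.single ⟨midCfg G u v hadj s, hQ, hE⟩ 1, ?_⟩
  funext b
  show sumLin _ (Pi.single _ 1) b = _
  rw [sumLin_single]
  have hb := b.2
  have hiff : DStep (midCfg G u v hadj s) b.1 ↔
      b.1 = cfg G s ∨ b.1 = cfg G (insert v (s.erase u)) :=
    dstep_midCfg_iff hadj hu hv b.1
  have hnecfg : cfg G s ≠ cfg G (insert v (s.erase u)) := cfg_ne_cfg hu hadj.ne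
  have e1 : (b = cfgEl G k s hs) ↔ b.1 = cfg G s := Subtype.ext_iff
  have e2 : (b = cfgEl G k _ ht) ↔ b.1 = cfg G (insert v (s.erase u)) := Subtype.ext_iff
  rw [Pi.add_apply, Pi.single_apply, Pi.single_apply]
  by_cases h1 : b.1 = cfg G s
  · rw [if_pos (hiff.2 (Or.inl h1)), if_pos (e1.2 h1), if_neg, add_zero]
    rw [e2, h1]
    exact hnecfg
  · by_cases h2 : b.1 = cfg G (insert v (s.erase u))
    · rw [if_pos (hiff.2 (Or.inr h2)), if_pos (e2.2 h2), if_neg (fun hh => h1 (e1.1 hh)),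
        zero_add]
    · rw [if_neg (fun hh => (hiff.1 hh).elim h1 h2), if_neg (fun hh => h1 (e1.1 hh)),
        if_neg (fun hh => h2 (e2.1 hh)), add_zero]

lemma self_add_self {M : Type} [AddCommGroup M] [Module (ZMod 2) M] (x : M) : x + x = 0 := by
  have h : x + x = (2 : ZMod 2) • x := by
    rw [two_smul]
  rw [h, show (2 : ZMod 2) = 0 by decide, zero_smul]

lemma pair_mem_range_of_reach {G : SimpleGraph V} (k : ℤ) {s t : Finset V}
    (h : Relation.ReflTransGen (Move G) s t) :
    ∀ (hs : (s.card : ℤ) = k) (ht : (t.card : ℤ) = k),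
    Pi.single (cfgEl G k s hs) (1 : ZMod 2) + Pi.single (cfgEl G k t ht) 1 ∈
      LinearMap.range (Dgr G (k - 1) k k k) := by
  induction h with
  | refl =>
    intro hs ht
    rw [self_add_self]
    exact Submodule.zero_mem _
  | @tail m t hst hmove ih =>
    intro hs ht
    have hm : ((m.card : ℤ)) = k := by rw [reflTransGen_move_card hst, hs]
    have h1 := ih hs hm
    have h2 := pair_mem_range k hmove hm ht
    have key : (Pi.single (cfgEl G k s hs) 1 : SC G k k) + Pi.single (cfgEl G k t ht) 1 =
        ((Pi.single (cfgEl G k s hs) 1 : SC G k k) + Pi.single (cfgEl G k m hm) 1) +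
          ((Pi.single (cfgEl G k m hm) 1 : SC G k k) + Pi.single (cfgEl G k t ht) 1) := by
      have h0 : (Pi.single (cfgEl G k m hm) 1 : SC G k k) + Pi.single (cfgEl G k m hm) 1 = 0 :=
        self_add_self _
      rw [add_assoc, ← add_assoc (a := (Pi.single (cfgEl G k m hm) 1 : SC G k k))
        (b := (Pi.single (cfgEl G k m hm) 1 : SC G k k)), h0, zero_add]
    rw [key]
    exact Submodule.add_mem _ h1 h2
/-- The sum-of-coordinates functional on `SC G k n`. -/
noncomputable def sumFun (G : SimpleGraph V) (k n : ℤ) : SC G k n →ₗ[ZMod 2] ZMod 2 where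
  toFun x := ∑ a, x a
  map_add' x y := by simp [Finset.sum_add_distrib]
  map_smul' c x := by simp [Finset.mul_sum]

lemma sumFun_apply (G : SimpleGraph V) (k n : ℤ) (x : SC G k n) :
    sumFun G k n x = ∑ a, x a := rfl

lemma sum_dgr_eq_zero {G : SimpleGraph V} (k : ℤ) (x : SC G (k - 1) k) :
    ∑ b, (Dgr G (k - 1) k k k) x b = 0 := by
  have hrw : ∀ b : {C : Config G // (Qg C : ℤ) = k ∧ (Eg C : ℤ) = k},
      (Dgr G (k - 1) k k k) x b = ∑ a, if DStep a.1 b.1 then x a else 0 := fun b => rfl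
  simp only [hrw]
  rw [Finset.sum_comm]
  apply Finset.sum_eq_zero
  intro a _
  -- the configuration `a` has exactly one red edge
  have hcard : a.1.red.card = 1 := by
    have h1 := a.2.1
    have h2 := a.2.2
    rw [Eg] at h2
    push_cast at h2
    omega
  obtain ⟨e, he⟩ := Finset.card_eq_one.1 hcard
  revert he
  induction e using Sym2.ind with
  | _ u v =>
  intro he
  have hadj : G.Adj u v := a.1.matching.1 s(u, v) (he ▸ Finset.mem_singleton_self _)
  have hCeq : a.1 = midCfg G u v hadj (insert u (minusSet a.1)) := eq_midCfg he hadj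
  have husign : a.1.sign u = none := by
    rw [a.1.sign_none u, he]
    exact ⟨s(u, v), Finset.mem_singleton_self _, by simp⟩
  have hvsign : a.1.sign v = none := by
    rw [a.1.sign_none v, he]
    exact ⟨s(u, v), Finset.mem_singleton_self _, by simp⟩
  have humem : u ∉ minusSet a.1 := by simp [minusSet, husign]
  have hvmem : v ∉ minusSet a.1 := by simp [minusSet, hvsign]
  set s : Finset V := insert u (minusSet a.1) with hsdef
  have hu : u ∈ s := Finset.mem_insert_self _ _
  have hv : v ∉ s := by
    simp only [hsdef, Finset.mem_insert]
    push_neg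
    exact ⟨hadj.ne', hvmem⟩
  have hscard : (s.card : ℤ) = k := by
    rw [hsdef, Finset.card_insert_of_notMem humem, ← Qg_eq_card_minusSet]
    have := a.2.1
    push_cast
    omega
  have htcard : ((insert v (s.erase u)).card : ℤ) = k := by
    rw [Move.card_eq ⟨u, v, hadj, hu, hv, rfl⟩]
    exact hscard
  set B1 := cfgEl G k s hscard with hB1
  set B2 := cfgEl G k (insert v (s.erase u)) htcard with hB2
  have hfilter : (Finset.univ.filter fun b : {C : Config G // (Qg C : ℤ) = k ∧ (Eg C : ℤ) = k}
      => DStep a.1 b.1) = {B1, B2} := by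
    ext b
    rw [Finset.mem_filter, hCeq]
    rw [dstep_midCfg_iff hadj hu hv b.1]
    simp only [Finset.mem_univ, true_and, Finset.mem_insert, Finset.mem_singleton]
    rw [show (b = B1) ↔ b.1 = cfg G s from Subtype.ext_iff,
      show (b = B2) ↔ b.1 = cfg G (insert v (s.erase u)) from Subtype.ext_iff]
  have hne12 : B1 ≠ B2 := by
    intro h
    exact cfg_ne_cfg hu hadj.ne (congrArg Subtype.val h)
  rw [Finset.sum_ite, Finset.sum_const, Finset.sum_const_zero, add_zero, hfilter,
    Finset.card_pair hne12, two_nsmul, self_add_self]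

lemma mem_range_iff {G : SimpleGraph V} (hG : G.Connected) {k : ℤ} (h0 : 0 ≤ k)
    (hk : k ≤ (Fintype.card V : ℤ)) (x : SC G k k) :
    x ∈ LinearMap.range (Dgr G (k - 1) k k k) ↔ ∑ a, x a = 0 := by
  obtain ⟨s0, _, hs0card⟩ := Finset.exists_subset_card_eq
    (show k.toNat ≤ (Finset.univ : Finset V).card by rw [Finset.card_univ]; omega)
  have hs0 : (s0.card : ℤ) = k := by rw [hs0card]; omega
  set a0 := cfgEl G k s0 hs0 with ha0
  have hpair : ∀ a : {C : Config G // (Qg C : ℤ) = k ∧ (Eg C : ℤ) = k},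
      (Pi.single a 1 : SC G k k) + Pi.single a0 1 ∈
        LinearMap.range (Dgr G (k - 1) k k k) := by
    intro a
    have hred : a.1.red = ∅ := red_empty_of_grading a.2
    have hcm : ((minusSet a.1).card : ℤ) = k := by
      rw [← Qg_eq_card_minusSet]; exact a.2.1
    have ha : a = cfgEl G k (minusSet a.1) hcm := Subtype.ext (eq_cfg_minusSet hred)
    have hreach : Relation.ReflTransGen (Move G) (minusSet a.1) s0 :=
      reach_of_card_eq hG _ _ _ rfl (by omega)
    rw [ha, ha0]
    exact pair_mem_range_of_reach k hreach hcm hs0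
  constructor
  · rintro ⟨y, rfl⟩
    exact sum_dgr_eq_zero k y
  · intro hsum
    have hx : x = ∑ a, x a • ((Pi.single a 1 : SC G k k) + Pi.single a0 1) := by
      have e1 : ∑ a, x a • (Pi.single a 1 : SC G k k) = x := by
        funext i
        rw [Finset.sum_apply]
        simp only [Pi.smul_apply, Pi.single_apply, smul_eq_mul, mul_ite, mul_one, mul_zero]
        simp [Finset.sum_ite_eq, Finset.sum_ite_eq']
      have e2 : ∑ a, x a • (Pi.single a0 1 : SC G k k) = 0 := by
        rw [← Finset.sum_smul, hsum, zero_smul]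
      calc x = ∑ a, x a • (Pi.single a 1 : SC G k k)
            + ∑ a, x a • (Pi.single a0 1 : SC G k k) := by rw [e1, e2, add_zero]
        _ = ∑ a, x a • ((Pi.single a 1 : SC G k k) + Pi.single a0 1) := by
            rw [← Finset.sum_add_distrib]
            exact Finset.sum_congr rfl fun a _ => (smul_add _ _ _).symm
    rw [hx]
    exact Submodule.sum_mem _ fun a _ => Submodule.smul_mem _ _ (hpair a)
lemma dgr_out_zero (G : SimpleGraph V) (k : ℤ) (x : SC G k k) :
    Dgr G k k (k + 1) k x = 0 := by
  funext b
  show (∑ a, if DStep a.1 b.1 then x a else 0) = 0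
  apply Finset.sum_eq_zero
  intro a _
  rw [if_neg]
  rintro ⟨e, he, -⟩
  rw [red_empty_of_grading a.2] at he
  exact absurd he (Finset.notMem_empty e)

/-- the zero-level Seifert cohomology: `dim SH^k(T,k) = 1` for
`0 ≤ k ≤ V` and `SH^k(T,k) = 0` otherwise. -/
theorem SHdim_zero_level (G : SimpleGraph V) (hG : G.IsTree) (k : ℤ) :
    SHdim G k k = if 0 ≤ k ∧ k ≤ (Fintype.card V : ℤ) then 1 else 0 := by
  by_cases hk : 0 ≤ k ∧ k ≤ (Fintype.card V : ℤ)
  · rw [if_pos hk]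
    rw [SHdim, cohDim]
    set g := Dgr G k k (k + 1) k with hgdef
    set Φ := (sumFun G k k).comp (LinearMap.ker g).subtype with hΦ
    have hkerΦ : LinearMap.ker Φ =
        (LinearMap.range (Dgr G (k - 1) k k k)).comap (LinearMap.ker g).subtype := by
      ext x
      rw [LinearMap.mem_ker, Submodule.mem_comap, hΦ, LinearMap.comp_apply,
        Submodule.subtype_apply, sumFun_apply,
        ← mem_range_iff hG.isConnected hk.1 hk.2 x.1]
    have hsurj : Function.Surjective Φ := by
      obtain ⟨s0, _, hs0card⟩ := Finset.exists_subset_card_eq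
        (show k.toNat ≤ (Finset.univ : Finset V).card by rw [Finset.card_univ]; omega)
      have hs0 : (s0.card : ℤ) = k := by rw [hs0card]; omega
      intro c
      refine ⟨⟨c • Pi.single (cfgEl G k s0 hs0) 1,
        LinearMap.mem_ker.2 (dgr_out_zero G k _)⟩, ?_⟩
      rw [hΦ, LinearMap.comp_apply, Submodule.subtype_apply, sumFun_apply]
      simp only [Pi.smul_apply, smul_eq_mul, ← Finset.mul_sum]
      rw [Fintype.sum_pi_single', mul_one]
    rw [← hkerΦ, (Φ.quotKerEquivOfSurjective hsurj).finrank_eq]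
    exact Module.finrank_self (ZMod 2)
  · rw [if_neg hk]
    have hempty : IsEmpty {C : Config G // (Qg C : ℤ) = k ∧ (Eg C : ℤ) = k} := by
      constructor
      rintro ⟨C, h1, h2⟩
      have hle : Qg C ≤ Fintype.card V := by
        rw [← Finset.card_univ]
        exact Finset.card_filter_le _ _
      apply hk
      constructor
      · rw [← h1]; positivity
      · rw [← h1]; exact_mod_cast hle
    haveI := hempty
    haveI : Subsingleton (SC G k k) := by
      haveI := Pi.uniqueOfIsEmpty (fun _ : {C : Config G // (Qg C : ℤ) = k ∧ (Eg C : ℤ) = k}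
        => ZMod 2)
      infer_instance
    haveI hks : Subsingleton (LinearMap.ker (Dgr G k k (k + 1) k)) :=
      ⟨fun a b => Subtype.ext (Subsingleton.elim _ _)⟩
    haveI : Subsingleton ((LinearMap.ker (Dgr G k k (k + 1) k)) ⧸
        (LinearMap.range (Dgr G (k - 1) k k k)).comap
          (LinearMap.ker (Dgr G k k (k + 1) k)).subtype) :=
      ⟨fun a b => Quotient.inductionOn₂' a b fun x y => by rw [Subsingleton.elim x y]⟩
    rw [SHdim, cohDim]
    exact Module.finrank_zero_of_subsingleton

end Seifert
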